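/- Let U = O·V where O and V are unitary n×n complex matrices with O·V = V·O and O² = 1, and let W be an invertible n×n complex matrix with W·O = −O·W and W·V = V·W. Then for every λ ∈ ℂ, the map ψ ↦ W ψ restricts to a linear bijection from the eigenspace ker(U − λ·1) onto the eigenspace ker(U + λ·1); consequently these two eigenspaces have equal dimension. (This gives the rigid pairing of equally degenerate Floquet eigenspaces with eigenphase difference π.) -/
import Mathlib


open Matrix

/-- Rigid pairing of equally degenerate Floquet eigenspaces with eigenphase difference π:
with `U = O·V` as in the canonical TTC drive and `W` invertible, anticommuting with `O`
and commuting with `V`, the map `ψ ↦ W ψ` restricts to a linear bijection from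
`ker(U − λ·1)` onto `ker(U + λ·1)`, so these eigenspaces have equal dimension. -/
theorem TTC_eigenspace_pairing (n : ℕ)
    (O V W : Matrix (Fin n) (Fin n) ℂ)
    (hO : O * Oᴴ = 1 ∧ Oᴴ * O = 1)
    (hV : V * Vᴴ = 1 ∧ Vᴴ * V = 1)
    (hW : IsUnit W)
    (hOV : O * V = V * O)
    (hO2 : O ^ 2 = 1)
    (hWO : W * O = -(O * W))
    (hWV : W * V = V * W)
    (U : Matrix (Fin n) (Fin n) ℂ) (hU : U = O * V) :
    ∀ lam : ℂ,
      (∃ e : LinearMap.ker (U - lam • (1 : Matrix (Fin n) (Fin n) ℂ)).mulVecLin ≃ₗ[ℂ]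
              LinearMap.ker (U + lam • (1 : Matrix (Fin n) (Fin n) ℂ)).mulVecLin,
          ∀ v : LinearMap.ker (U - lam • (1 : Matrix (Fin n) (Fin n) ℂ)).mulVecLin,
            (e v : Fin n → ℂ) = W.mulVec (v : Fin n → ℂ)) ∧
      Module.finrank ℂ (LinearMap.ker (U - lam • (1 : Matrix (Fin n) (Fin n) ℂ)).mulVecLin) =
        Module.finrank ℂ (LinearMap.ker (U + lam • (1 : Matrix (Fin n) (Fin n) ℂ)).mulVecLin) := by
  intro lam
  -- W anticommutes with U
  have hWU : W * U = -(U * W) := by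
    rw [hU, ← mul_assoc, hWO, neg_mul, mul_assoc, hWV, ← mul_assoc]
  -- key intertwining relation
  have hkey : W * (U - lam • 1) = -((U + lam • 1) * W) := by
    rw [mul_sub, add_mul, neg_add, hWU]
    simp [Matrix.smul_mul, Matrix.mul_smul, sub_eq_add_neg]
  -- inverse of W
  have hdet : IsUnit W.det := (Matrix.isUnit_iff_isUnit_det W).mp hW
  have hWinv1 : W * W⁻¹ = 1 := Matrix.mul_nonsing_inv W hdet
  have hWinv2 : W⁻¹ * W = 1 := Matrix.nonsing_inv_mul W hdet
  -- linear equivalence given by W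
  let f : (Fin n → ℂ) ≃ₗ[ℂ] (Fin n → ℂ) :=
    LinearEquiv.ofLinear W.mulVecLin (W⁻¹).mulVecLin
      (by rw [← Matrix.mulVecLin_mul, hWinv1, Matrix.mulVecLin_one])
      (by rw [← Matrix.mulVecLin_mul, hWinv2, Matrix.mulVecLin_one])
  have hmap : (LinearMap.ker (U - lam • (1 : Matrix (Fin n) (Fin n) ℂ)).mulVecLin).map
      (f : (Fin n → ℂ) →ₗ[ℂ] (Fin n → ℂ))
      = LinearMap.ker (U + lam • (1 : Matrix (Fin n) (Fin n) ℂ)).mulVecLin := by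
    ext x
    simp only [Submodule.mem_map, LinearMap.mem_ker, Matrix.mulVecLin_apply]
    constructor
    · rintro ⟨v, hv, rfl⟩
      show (U + lam • 1) *ᵥ (W *ᵥ v) = 0
      rw [Matrix.mulVec_mulVec, ← neg_neg ((U + lam • 1) * W), ← hkey, Matrix.neg_mulVec,
        ← Matrix.mulVec_mulVec, hv, Matrix.mulVec_zero, neg_zero]
    · intro hx
      refine ⟨W⁻¹.mulVec x, ?_, ?_⟩
      · have h1 : W.mulVec ((U - lam • 1).mulVec (W⁻¹.mulVec x)) = 0 := by
          rw [Matrix.mulVec_mulVec, Matrix.mulVec_mulVec, hkey, Matrix.neg_mul,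
            Matrix.neg_mulVec, mul_assoc, hWinv1, mul_one, hx, neg_zero]
        have := congrArg (W⁻¹.mulVec) h1
        simpa [Matrix.mulVec_mulVec, ← mul_assoc, hWinv2] using this
      · show W.mulVec (W⁻¹.mulVec x) = x
        simp [Matrix.mulVec_mulVec, hWinv1]
  let e := (f.submoduleMap (LinearMap.ker (U - lam • (1 : Matrix (Fin n) (Fin n) ℂ)).mulVecLin)).trans
    (LinearEquiv.ofEq _ _ hmap)
  refine ⟨⟨e, fun v => rfl⟩, e.finrank_eq⟩
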